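/- Knight's identity: for every τ ∈ (0,1) and all real numbers x and y, ρ_τ(x − y) − ρ_τ(x) = −y·ψ_τ(x) + ∫₀^y (1{x ≤ t} − 1{x ≤ 0}) dt, where the integral is the oriented Lebesgue interval integral from 0 to y. -/

import Mathlib

open MeasureTheory intervalIntegral

/-- The quantile check function `ρ_τ(u) = u·(τ − 1{u < 0})`. -/
noncomputable def checkFun (τ u : ℝ) : ℝ := u * (τ - if u < 0 then 1 else 0)

/-- `ψ_τ(x) = τ − 1{x ≤ 0}`. -/
noncomputable def psiFun (τ x : ℝ) : ℝ := τ - if x ≤ 0 then 1 else 0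

lemma step_intervalIntegrable (x a b : ℝ) :
    IntervalIntegrable (fun t => if x ≤ t then (1 : ℝ) else 0) volume a b := by
  apply Monotone.intervalIntegrable
  intro s t hst
  dsimp only
  split_ifs with h1 h2 <;> simp_all
  linarith

lemma integral_step (x y : ℝ) :
    ∫ t in (0 : ℝ)..y, (if x ≤ t then (1 : ℝ) else 0) =
      max (y - x) 0 - max (-x) 0 := by
  have hind : (fun t : ℝ => if x ≤ t then (1 : ℝ) else 0) =
      Set.indicator (Set.Ici x) (fun _ => (1 : ℝ)) := by
    funext t; simp [Set.indicator_apply]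
  rw [hind]
  rcases le_total 0 y with hy | hy
  · rw [intervalIntegral.integral_of_le hy,
      MeasureTheory.setIntegral_indicator measurableSet_Ici]
    rcases le_or_gt x 0 with hx | hx
    · have hset : Set.Ioc 0 y ∩ Set.Ici x = Set.Ioc 0 y := by
        ext t
        simp only [Set.mem_inter_iff, Set.mem_Ici, Set.mem_Ioc, and_iff_left_iff_imp]
        rintro ⟨h1, h2⟩; linarith
      rw [hset]
      simp only [MeasureTheory.setIntegral_const, smul_eq_mul, mul_one, MeasureTheory.measureReal_def, Real.volume_Ioc, sub_zero]
      rw [ENNReal.toReal_ofReal (by linarith), max_eq_left (by linarith),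
        max_eq_left (by linarith)]
      ring
    · rcases le_or_gt x y with hxy | hxy
      · have hset : Set.Ioc 0 y ∩ Set.Ici x = Set.Icc x y := by
          ext t
          simp only [Set.mem_inter_iff, Set.mem_Ici, Set.mem_Ioc, Set.mem_Icc]
          constructor
          · rintro ⟨⟨h1, h2⟩, h3⟩; exact ⟨h3, h2⟩
          · rintro ⟨h1, h2⟩; exact ⟨⟨by linarith, h2⟩, h1⟩
        rw [hset]
        simp only [MeasureTheory.setIntegral_const, smul_eq_mul, mul_one, MeasureTheory.measureReal_def, Real.volume_Icc]
        rw [ENNReal.toReal_ofReal (by linarith), max_eq_left (by linarith),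
          max_eq_right (by linarith)]
        ring
      · have hset : Set.Ioc 0 y ∩ Set.Ici x = ∅ := by
          ext t
          simp only [Set.mem_inter_iff, Set.mem_Ici, Set.mem_Ioc, Set.mem_empty_iff_false,
            iff_false, not_and]
          rintro ⟨h1, h2⟩ h3; linarith
        rw [hset]
        simp only [MeasureTheory.setIntegral_empty]
        rw [max_eq_right (by linarith), max_eq_right (by linarith)]
        ring
  · rw [intervalIntegral.integral_of_ge hy,
      MeasureTheory.setIntegral_indicator measurableSet_Ici]
    rcases le_or_gt x y with hx | hx
    · have hset : Set.Ioc y 0 ∩ Set.Ici x = Set.Ioc y 0 := by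
        ext t
        simp only [Set.mem_inter_iff, Set.mem_Ici, Set.mem_Ioc, and_iff_left_iff_imp]
        rintro ⟨h1, h2⟩; linarith
      rw [hset]
      simp only [MeasureTheory.setIntegral_const, smul_eq_mul, mul_one, MeasureTheory.measureReal_def, Real.volume_Ioc, zero_sub]
      rw [ENNReal.toReal_ofReal (by linarith), max_eq_left (by linarith),
        max_eq_left (by linarith)]
      ring
    · rcases le_or_gt x 0 with hx0 | hx0
      · have hset : Set.Ioc y 0 ∩ Set.Ici x = Set.Icc x 0 := by
          ext t
          simp only [Set.mem_inter_iff, Set.mem_Ici, Set.mem_Ioc, Set.mem_Icc]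
          constructor
          · rintro ⟨⟨h1, h2⟩, h3⟩; exact ⟨h3, h2⟩
          · rintro ⟨h1, h2⟩; exact ⟨⟨by linarith, h2⟩, h1⟩
        rw [hset]
        simp only [MeasureTheory.setIntegral_const, smul_eq_mul, mul_one, MeasureTheory.measureReal_def, Real.volume_Icc, zero_sub]
        rw [ENNReal.toReal_ofReal (by linarith), max_eq_right (by linarith),
          max_eq_left (by linarith)]
        ring
      · have hset : Set.Ioc y 0 ∩ Set.Ici x = ∅ := by
          ext t
          simp only [Set.mem_inter_iff, Set.mem_Ici, Set.mem_Ioc, Set.mem_empty_iff_false,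
            iff_false, not_and]
          rintro ⟨h1, h2⟩ h3; linarith
        rw [hset]
        simp only [MeasureTheory.setIntegral_empty, neg_zero]
        rw [max_eq_right (by linarith), max_eq_right (by linarith)]
        ring

/-- Knight's identity. -/
theorem knight_identity (τ : ℝ) (hτ : τ ∈ Set.Ioo (0 : ℝ) 1) (x y : ℝ) :
    checkFun τ (x - y) - checkFun τ x =
      -y * psiFun τ x +
        ∫ t in (0 : ℝ)..y,
          ((if x ≤ t then (1 : ℝ) else 0) - (if x ≤ 0 then (1 : ℝ) else 0)) := by
  have hint : (∫ t in (0 : ℝ)..y,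
      ((if x ≤ t then (1 : ℝ) else 0) - (if x ≤ 0 then (1 : ℝ) else 0))) =
      (max (y - x) 0 - max (-x) 0) - y * (if x ≤ 0 then (1 : ℝ) else 0) := by
    rw [intervalIntegral.integral_sub (step_intervalIntegrable x 0 y)
      intervalIntegrable_const, integral_step, intervalIntegral.integral_const]
    simp only [smul_eq_mul, sub_zero]
    try ring
  rw [hint]
  simp only [checkFun, psiFun]
  rcases le_or_gt (y - x) 0 with h1 | h1 <;>
  rcases le_or_gt x 0 with h2 | h2 <;>
  [ rw [max_eq_right h1, max_eq_left (by linarith : (0:ℝ) ≤ -x)];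
    rw [max_eq_right h1, max_eq_right (by linarith : -x ≤ (0:ℝ))];
    rw [max_eq_left h1.le, max_eq_left (by linarith : (0:ℝ) ≤ -x)];
    rw [max_eq_left h1.le, max_eq_right (by linarith : -x ≤ (0:ℝ))] ] <;>
  split_ifs <;>
  first | ring1 | linarith | nlinarith
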